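/- Let 0 < ρ < 1 and w ∈ (0,1), and consider the (n+1)×(n+1) limit Pick matrix M with upper-left n×n block P having all entries 1/(1−ρ²), border column Q of ones, and lower-right scalar R = 1 − w². A necessary condition obtained from the perturbed problem is: if for all sufficiently small ε_i > 0 the Pick matrix with P_{ij} = 1/(1 − ρ²/((1+ε_i)(1+ε_j))) is positive semidefinite, then ρ^n ≥ w. -/

import Mathlib

open Finset Polynomial Matrix

lemma pick_partial_fraction (n : ℕ) (q : Fin n → ℝ) (hq : Function.Injective q)
    (hq0 : ∀ i, 0 < q i) (hq1 : ∀ i, q i < 1) :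
    ∃ c : Fin n → ℝ,
      (∀ i, ∑ j, c j / (1 - q j * q i) = -((-1 : ℝ) ^ n / ∏ k, q k)) ∧
      (∑ j, c j = (-1 : ℝ) ^ n * ∏ k, q k - (-1 : ℝ) ^ n / ∏ k, q k) := by
  have hqne : ∀ i, q i ≠ 0 := fun i => (hq0 i).ne'
  set v : Fin n → ℝ := fun i => (q i)⁻¹ with hv
  have hvinj : Set.InjOn v (univ : Finset (Fin n)) := by
    intro a _ b _ h
    exact hq (by rwa [hv, _root_.inv_inj] at h)
  set G : ℝ[X] := (∏ k, (X - C (q k))) - ∏ k, (X - C (v k)) with hG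
  have hfact : ∀ (z : ℝ) (k : Fin n), -(q k)⁻¹ * (1 - q k * z) = z - v k := by
    intro z k
    have h := inv_mul_cancel₀ (hqne k)
    simp only [hv]
    linear_combination z * h
  have hevalG : ∀ z : ℝ, G.eval z = (∏ k, (z - q k)) - ∏ k, (z - v k) := by
    intro z; simp [hG, eval_prod]
  have hprod2 : ∀ z : ℝ, (∏ k, (z - v k)) = ((-1 : ℝ) ^ n / ∏ k, q k) * ∏ k, (1 - q k * z) := by
    intro z
    rw [Finset.prod_congr rfl (fun k _ => (hfact z k).symm), Finset.prod_mul_distrib]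
    have h1 : (∏ k : Fin n, (-(q k)⁻¹ : ℝ)) = (-1 : ℝ) ^ n / ∏ k, q k := by
      rw [show (fun k : Fin n => (-(q k)⁻¹ : ℝ)) = fun k => (-1) * (q k)⁻¹ by ext k; ring,
        Finset.prod_mul_distrib, Finset.prod_const, Finset.prod_inv_distrib,
        Finset.card_univ, Fintype.card_fin, div_eq_mul_inv]
    rw [h1]
  have hm1 : (∏ k : Fin n, (X - C (q k)) : ℝ[X]).Monic :=
    monic_prod_of_monic _ _ fun k _ => monic_X_sub_C (q k)
  have hm2 : (∏ k : Fin n, (X - C (v k)) : ℝ[X]).Monic :=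
    monic_prod_of_monic _ _ fun k _ => monic_X_sub_C (v k)
  have hd1 : (∏ k : Fin n, (X - C (q k)) : ℝ[X]).natDegree = n := by
    rw [Polynomial.natDegree_prod_of_monic _ _ (fun k _ => monic_X_sub_C (q k))]
    simp
  have hd2 : (∏ k : Fin n, (X - C (v k)) : ℝ[X]).natDegree = n := by
    rw [Polynomial.natDegree_prod_of_monic _ _ (fun k _ => monic_X_sub_C (v k))]
    simp
  have hdegG : G.degree < (n : ℕ) := by
    rcases eq_or_ne n 0 with h0 | h0
    · subst h0
      have hG0 : G = 0 := by simp [hG]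
      rw [hG0, degree_zero]
      exact WithBot.bot_lt_coe _
    · have hdeq : (∏ k : Fin n, (X - C (q k)) : ℝ[X]).degree
          = (∏ k : Fin n, (X - C (v k)) : ℝ[X]).degree := by
        rw [Polynomial.degree_eq_natDegree hm1.ne_zero,
          Polynomial.degree_eq_natDegree hm2.ne_zero, hd1, hd2]
      have h := Polynomial.degree_sub_lt hdeq hm1.ne_zero
        (by rw [hm1.leadingCoeff, hm2.leadingCoeff])
      rwa [Polynomial.degree_eq_natDegree hm1.ne_zero, hd1] at h
  have hinterp := Lagrange.eq_interpolate (f := G) hvinj (by simpa using hdegG)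
  set c : Fin n → ℝ := fun j =>
    G.eval (v j) * ∏ k ∈ univ.erase j, ((v j - v k)⁻¹ * (-(q k)⁻¹)) with hc
  have key : ∀ z : ℝ, (∀ k, (1 : ℝ) - q k * z ≠ 0) →
      (∑ j, c j / (1 - q j * z)) * ∏ k, (1 - q k * z) = G.eval z := by
    intro z hz
    have hbasis : ∀ j : Fin n, (Lagrange.basis univ v j).eval z
        = ∏ k ∈ univ.erase j, ((v j - v k)⁻¹ * (z - v k)) := by
      intro j
      rw [Lagrange.basis, eval_prod]
      exact Finset.prod_congr rfl fun k _ => by simp [Lagrange.basisDivisor]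
    have hGz : G.eval z = ∑ j, G.eval (v j) * (Lagrange.basis univ v j).eval z := by
      conv_lhs => rw [hinterp]
      simp [Lagrange.interpolate_apply, eval_finset_sum]
    rw [hGz, Finset.sum_mul]
    refine Finset.sum_congr rfl fun j _ => ?_
    rw [hbasis]
    have hsplit : (∏ k, ((1 : ℝ) - q k * z))
        = (1 - q j * z) * ∏ k ∈ univ.erase j, (1 - q k * z) := by
      rw [← Finset.mul_prod_erase _ _ (mem_univ j)]
    rw [hsplit, ← mul_assoc, div_mul_cancel₀ _ (hz j)]
    simp only [hc]
    rw [mul_assoc, ← Finset.prod_mul_distrib]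
    congr 1
    refine Finset.prod_congr rfl fun k _ => ?_
    rw [mul_assoc, hfact z k]
  refine ⟨c, ?_, ?_⟩
  · intro i
    have hz : ∀ k, (1 : ℝ) - q k * q i ≠ 0 := by
      intro k
      have : q k * q i < 1 := by nlinarith [hq0 k, hq0 i, hq1 k, hq1 i]
      linarith
    have h1 := key (q i) hz
    have hzero : (∏ k, (q i - q k)) = 0 :=
      Finset.prod_eq_zero (mem_univ i) (by ring)
    rw [hevalG, hzero, hprod2, zero_sub] at h1
    have hprodne : (∏ k, ((1 : ℝ) - q k * q i)) ≠ 0 :=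
      Finset.prod_ne_zero_iff.2 fun k _ => hz k
    have h2 : (∑ j, c j / (1 - q j * q i)) * (∏ k, ((1 : ℝ) - q k * q i))
        = (-((-1 : ℝ) ^ n / ∏ k, q k)) * (∏ k, ((1 : ℝ) - q k * q i)) := by
      rw [h1]; ring
    exact mul_right_cancel₀ hprodne h2
  · have hz : ∀ k, (1 : ℝ) - q k * 0 ≠ 0 := by intro k; simp
    have h1 := key 0 hz
    simp only [mul_zero, sub_zero, div_one, Finset.prod_const_one, mul_one] at h1
    rw [hevalG, hprod2] at h1
    simp only [mul_zero, sub_zero, Finset.prod_const_one, mul_one] at h1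
    have h3 : (∏ k, ((0 : ℝ) - q k)) = (-1 : ℝ) ^ n * ∏ k, q k := by
      rw [show (fun k : Fin n => (0 : ℝ) - q k) = fun k => (-1) * q k by ext k; ring,
        Finset.prod_mul_distrib, Finset.prod_const, Finset.card_univ, Fintype.card_fin]
    rw [h3] at h1
    exact h1

theorem stmt_9 (n : ℕ) (hn : 1 ≤ n) (ρ w : ℝ) (hρ0 : 0 < ρ) (hρ1 : ρ < 1)
    (hw0 : 0 < w) (hw1 : w < 1)
    (hpsd : ∃ δ > 0, ∀ ε : Fin n → ℝ, (∀ i, 0 < ε i ∧ ε i < δ) →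
      (Matrix.of (fun i j : Fin (n + 1) =>
        if hi : (i : ℕ) < n then
          if hj : (j : ℕ) < n then
            1 / (1 - ρ ^ 2 / ((1 + ε ⟨i, hi⟩) * (1 + ε ⟨j, hj⟩)))
          else 1
        else
          if (j : ℕ) < n then 1 else 1 - w ^ 2)).PosSemidef) :
    w ≤ ρ ^ n := by
  obtain ⟨δ, hδ, hp⟩ := hpsd
  have hn' : 0 < n := hn
  have hn0 : (0:ℝ) < n := by exact_mod_cast hn'
  set ε : Fin n → ℝ := fun i => δ * ((i:ℕ) + 1) / (2 * n) with hε
  have hεpos : ∀ i, 0 < ε i ∧ ε i < δ := by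
    intro i
    constructor
    · apply div_pos (mul_pos hδ (by positivity)) (by positivity)
    · rw [hε]
      have hi : ((i:ℕ):ℝ) + 1 ≤ n := by exact_mod_cast Nat.succ_le_of_lt i.is_lt
      simp only
      rw [div_lt_iff₀ (by positivity)]
      nlinarith [hδ, hi, hn0]
  set M : Matrix (Fin (n+1)) (Fin (n+1)) ℝ := Matrix.of (fun i j : Fin (n + 1) =>
        if hi : (i : ℕ) < n then
          if hj : (j : ℕ) < n then
            1 / (1 - ρ ^ 2 / ((1 + ε ⟨i, hi⟩) * (1 + ε ⟨j, hj⟩)))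
          else 1
        else
          if (j : ℕ) < n then 1 else 1 - w ^ 2) with hMdef
  have hM : M.PosSemidef := hp ε hεpos
  set q : Fin n → ℝ := fun i => ρ / (1 + ε i) with hqdef
  have hεnn : ∀ i, 0 < ε i := fun i => (hεpos i).1
  have hq0 : ∀ i, 0 < q i := fun i => div_pos hρ0 (by linarith [hεnn i])
  have hq1 : ∀ i, q i < 1 := by
    intro i
    rw [hqdef]
    simp only
    rw [div_lt_one (by linarith [hεnn i])]
    linarith [hεnn i, hρ1]
  have hqle : ∀ i, q i ≤ ρ := by
    intro i
    rw [hqdef]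
    simp only
    rw [div_le_iff₀ (by linarith [hεnn i])]
    nlinarith [hεnn i, hρ0]
  have hqinj : Function.Injective q := by
    intro a b hab
    have h1 : (0:ℝ) < 1 + ε a := by linarith [hεnn a]
    have h2 : (0:ℝ) < 1 + ε b := by linarith [hεnn b]
    rw [hqdef] at hab
    simp only at hab
    have hεab : ε a = ε b := by
      rw [div_eq_div_iff h1.ne' h2.ne'] at hab
      have h3 := mul_left_cancel₀ hρ0.ne' hab
      linarith
    have h2n : ((2:ℝ) * n) ≠ 0 := by positivity
    rw [hε] at hεab
    simp only at hεab
    rw [div_eq_div_iff h2n h2n] at hεab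
    have h5 : δ * ((↑↑a:ℝ)+1) = δ * ((↑↑b:ℝ)+1) := mul_right_cancel₀ h2n hεab
    have h4 := mul_left_cancel₀ hδ.ne' h5
    have h6 : ((a:ℕ):ℝ) = ((b:ℕ):ℝ) := by linarith
    exact Fin.ext (by exact_mod_cast h6)
  obtain ⟨c, hc1, hc2⟩ := pick_partial_fraction n q hqinj hq0 hq1
  set P := ∏ k, q k with hPdef
  set E : ℝ := (-1:ℝ)^n with hEdef
  set A : ℝ := E / P with hAdef
  set S : ℝ := ∑ j, c j with hSdef
  have hP0 : 0 < P := Finset.prod_pos (fun i _ => hq0 i)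
  have hPle : P ≤ ρ ^ n := by
    rw [hPdef]
    calc (∏ k, q k) ≤ ∏ _k : Fin n, ρ :=
          Finset.prod_le_prod (fun i _ => (hq0 i).le) (fun i _ => hqle i)
      _ = ρ ^ n := by simp
  have hP1 : P < 1 := lt_of_le_of_lt hPle (pow_lt_one₀ hρ0.le hρ1 (by omega))
  have h1w : (0:ℝ) < 1 - w^2 := by nlinarith
  set t : ℝ := -S / (1 - w^2) with htdef
  set x : Fin (n+1) → ℝ := fun i => if h : (i:ℕ) < n then c ⟨i, h⟩ else t with hxdef
  have hxc : ∀ i : Fin n, x i.castSucc = c i := by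
    intro i
    rw [hxdef]
    simp [Fin.is_lt]
  have hxl : x (Fin.last n) = t := by
    rw [hxdef]; simp
  have hqq : ∀ i j : Fin n, ρ^2 / ((1 + ε i) * (1 + ε j)) = q i * q j := by
    intro i j
    rw [hqdef]
    simp only
    rw [div_mul_div_comm, ← pow_two]
  have hcc : ∀ i j : Fin n, M i.castSucc j.castSucc = 1 / (1 - q i * q j) := by
    intro i j
    rw [hMdef]
    simp only [Matrix.of_apply, Fin.coe_castSucc, Fin.is_lt, dif_pos, Fin.eta]
    rw [hqq]
  have hcl : ∀ i : Fin n, M i.castSucc (Fin.last n) = 1 := by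
    intro i
    rw [hMdef]
    simp [Fin.is_lt]
  have hlc : ∀ j : Fin n, M (Fin.last n) j.castSucc = 1 := by
    intro j
    rw [hMdef]
    simp [Fin.is_lt]
  have hll : M (Fin.last n) (Fin.last n) = 1 - w^2 := by
    rw [hMdef]; simp
  have hmv : ∀ i : Fin n, (M *ᵥ x) i.castSucc = -A + t := by
    intro i
    simp only [Matrix.mulVec, dotProduct]
    rw [Fin.sum_univ_castSucc]
    simp only [hcc, hxc, hcl, hxl]
    have hs : ∑ j : Fin n, 1/(1 - q i * q j) * c j = ∑ j, c j / (1 - q j * q i) := by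
      refine Finset.sum_congr rfl fun j _ => ?_
      rw [mul_comm (q i) (q j)]; ring
    rw [hs, hc1 i, one_mul]
  have hmvl : (M *ᵥ x) (Fin.last n) = S + (1 - w^2) * t := by
    simp only [Matrix.mulVec, dotProduct]
    rw [Fin.sum_univ_castSucc]
    simp only [hlc, hxc, hll, hxl, one_mul]
    rw [← hSdef]
  have h0 := hM.dotProduct_mulVec_nonneg x
  have hdot : star x ⬝ᵥ (M *ᵥ x) = S * (-A + t) + t * (S + (1 - w^2) * t) := by
    have hstar : star x = x := by
      funext i; simp
    rw [hstar]
    simp only [dotProduct]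
    rw [Fin.sum_univ_castSucc]
    simp only [hxc, hxl, hmv, hmvl]
    rw [← Finset.sum_mul, ← hSdef]
  rw [hdot] at h0
  clear_value E A S t P
  -- algebra: conclude w ≤ P
  have hPne : P ≠ 0 := hP0.ne'
  have hwne : (1 - w^2) ≠ 0 := h1w.ne'
  have hE2 : E^2 = 1 := by
    rw [hEdef, ← pow_mul, mul_comm n 2, pow_mul, neg_one_sq, one_pow]
  have ht' : (1 - w^2) * t = -S := by
    rw [htdef]
    field_simp
  have hSA'' : S * A * P^2 = P^2 - 1 := by
    rw [hc2, hAdef]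
    field_simp
    linear_combination (P^2 - 1) * hE2
  have hS2'' : S^2 * P^2 = (P^2 - 1)^2 := by
    rw [hc2, hAdef]
    field_simp
    linear_combination (P^2 - 1)^2 * hE2
  have h2 : 0 ≤ (1 - w^2) * P^2 * (S * (-A + t) + t * (S + (1 - w^2) * t)) := by
    exact mul_nonneg (mul_nonneg h1w.le (sq_nonneg P)) h0
  have hident : (1 - w^2) * P^2 * (S * (-A + t) + t * (S + (1 - w^2) * t))
      = -((P^2 - 1)^2 + (1 - w^2) * (P^2 - 1)) := by
    linear_combination (P^2 * ((1 - w^2) * t + S)) * ht' - hS2'' - (1 - w^2) * hSA''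
  have key3 : (P^2 - 1)^2 + (1 - w^2) * (P^2 - 1) ≤ 0 := by linarith [h2, hident.le, hident.ge]
  clear hdot h0 h2 hident hmv hmvl hcc hcl hlc hll hxc hxl hM hp hMdef hqq hc1 hc2 ht' hSA'' hS2'' hE2 hεpos hεnn hq0 hq1 hqle hqinj htdef hxdef hAdef hSdef hEdef hPdef
  clear x M c hqdef q hε ε t S A E
  have hP2 : P^2 < 1 := by nlinarith [hP0, hP1]
  have hu : (0:ℝ) < 1 - P^2 := by linarith
  have hw2 : w^2 ≤ P^2 := by nlinarith [key3, hu]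
  have hwP : w ≤ P := by nlinarith [hw2, hP0, hw0]
  linarith [hPle]
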